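/- Let G be a group acting on a tree T (without inversions) such that every vertex stabilizer is trivial. Then G is a free group. -/

import Mathlib

universe u v

namespace FreeActionTreeAux

open SimpleGraph

variable {V : Type v} {T : SimpleGraph V}

lemma mem_of_getLast? {α : Type*} {l : List α} {a : α} (h : l.getLast? = some a) : a ∈ l := by
  induction l with
  | nil => simp at h
  | cons x xs ih =>
    cases xs with
    | nil => simp_all
    | cons y ys =>
      rw [List.getLast?_cons_cons] at h
      exact List.mem_cons_of_mem _ (ih h)

/-- The no-backtracking relation on darts. -/
def Bk : T.Dart → T.Dart → Prop := fun d d' => d'.toProd.2 ≠ d.toProd.1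

/-- A walk is reduced ("good") if it never immediately backtracks. -/
def Good {u v : V} (w : T.Walk u v) : Prop := w.darts.Chain' Bk

lemma Good.of_isPath {u v : V} {w : T.Walk u v} (h : w.IsPath) : Good w := by
  induction w with
  | nil => exact List.isChain_nil
  | @cons u b v ha p ih =>
    rw [Good, Walk.darts_cons]
    refine List.isChain_cons.2 ⟨?_, ih h.of_cons⟩
    intro y hy
    cases p with
    | nil => simp at hy
    | @cons b c v h2 q =>
      rw [Walk.darts_cons, List.head?_cons, Option.mem_some_iff] at hy
      subst hy
      have hu : u ∉ (Walk.cons h2 q).support := ((Walk.cons_isPath_iff _ _).mp h).2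
      have hc : c ∈ (Walk.cons h2 q).support := by
        rw [Walk.support_cons]
        exact List.mem_cons_of_mem _ q.start_mem_support
      intro hcu
      have hcu' : c = u := hcu
      exact hu (by rw [← hcu']; exact hc)

lemma dart_fst_ne_end {x y : V} {q : T.Walk x y} (hq : q.IsPath) {d : T.Dart}
    (hd : d ∈ q.darts) : d.toProd.1 ≠ y := by
  induction q with
  | nil => simp at hd
  | @cons x b y ha p ih =>
    rw [Walk.darts_cons, List.mem_cons] at hd
    rcases hd with rfl | hd
    · intro hxy
      have hxy' : x = y := hxy
      exact ((Walk.cons_isPath_iff _ _).mp hq).2 (by rw [hxy']; exact p.end_mem_support)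
    · exact ih ((Walk.cons_isPath_iff _ _).mp hq).1 hd

lemma dart_fst_eq_start {x y : V} {q : T.Walk x y} (hq : q.IsPath) {d : T.Dart}
    (hd : d ∈ q.darts) (h1 : d.toProd.1 = x) : q.darts.head? = some d := by
  induction q with
  | nil => simp at hd
  | @cons x b y ha p ih =>
    rw [Walk.darts_cons, List.mem_cons] at hd
    rcases hd with rfl | hd
    · rfl
    · exfalso
      have := Walk.dart_fst_mem_support_of_mem_darts p hd
      rw [h1] at this
      exact ((Walk.cons_isPath_iff _ _).mp hq).2 this

lemma Good.isPath (hA : T.IsAcyclic) {u v : V} {w : T.Walk u v} (h : Good w) : w.IsPath := by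
  classical
  induction w with
  | nil => exact Walk.IsPath.nil
  | @cons u b v ha p ih =>
    rw [Good, Walk.darts_cons] at h
    have hp : p.IsPath := ih (List.isChain_cons.mp h).2
    by_cases hu : u ∈ p.support
    · exfalso
      set q := p.takeUntil u hu with hqdef
      have hq : q.IsPath := hp.takeUntil hu
      have hedge : s(u, b) ∉ q.edges := by
        intro hins
        rw [Walk.edges, List.mem_map] at hins
        obtain ⟨d, hd, hde⟩ := hins
        have : (d.toProd.1 = u ∧ d.toProd.2 = b) ∨ (d.toProd.1 = b ∧ d.toProd.2 = u) := by
          rwa [Dart.edge, Sym2.eq_iff] at hde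
        rcases this with ⟨h1, _⟩ | ⟨h1, h2⟩
        · exact dart_fst_ne_end hq hd h1
        · -- d = (b, u) is the first dart of q, hence of p; contradicts Good
          have hhead : q.darts.head? = some d := dart_fst_eq_start hq hd h1
          have hpq : p.darts = q.darts ++ (p.dropUntil u hu).darts := by
            conv_lhs => rw [← Walk.take_spec p hu]
            rw [Walk.darts_append]
          have hph : p.darts.head? = some d := by
            rw [hpq]
            cases hq' : q.darts with
            | nil => rw [hq'] at hhead; simp at hhead
            | cons d0 l =>
              rw [hq'] at hhead
              simp at hhead
              simp [hhead]
          have := (List.isChain_cons.mp h).1 d (by rw [hph]; rfl)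
          exact this h2
      exact hA (Walk.cons ha q) ((Walk.cons_isCycle_iff q ha).2 ⟨hq, hedge⟩)
    · exact hp.cons hu

lemma Good.map {f : T →g T} (hf : Function.Injective f) {u v : V} {w : T.Walk u v}
    (h : Good w) : Good (w.map f) := by
  rw [Good, Walk.darts_map]
  refine (List.isChain_map _).2 (h.imp ?_)
  intro d d' hb
  simp only [Bk, Hom.mapDart_apply, Prod.map] at *
  intro hc
  exact hb (hf hc)

lemma darts_map_head? {f : T →g T} {u v : V} (w : T.Walk u v) :
    (w.map f).darts.head? = w.darts.head?.map f.mapDart := by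
  rw [Walk.darts_map, List.head?_map]

end FreeActionTreeAux

open SimpleGraph FreeActionTreeAux in
/-- If a group `G` acts (without inversions) on a tree `T` with trivial
vertex stabilizers, then `G` is a free group. -/
theorem free_of_free_action_on_tree
    (G : Type u) (V : Type v) [Group G] [MulAction G V]
    (T : SimpleGraph V) (hT : T.IsTree)
    (hadj : ∀ (g : G) (u v : V), T.Adj u v → T.Adj (g • u) (g • v))
    (hninv : ∀ (g : G) (u v : V), T.Adj u v → g • u = v → ¬ g • v = u)
    (hfree : ∀ (g : G) (v : V), g • v = v → g = 1) :
    ∃ S : Type u, Nonempty (G ≃* FreeGroup S) := by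
  classical
  obtain ⟨v₀⟩ := hT.isConnected.nonempty
  have hconn : T.Preconnected := hT.isConnected.preconnected
  have hacy : T.IsAcyclic := hT.IsAcyclic
  have hcancel : ∀ (g h : G) (v : V), g • v = h • v → g = h := by
    intro g h v hv
    have h1 : (h⁻¹ * g) • v = v := by rw [mul_smul, hv, inv_smul_smul]
    have h2 := hfree _ _ h1
    exact (inv_mul_eq_one.mp h2).symm
  -- no 2-torsion
  have htor : ∀ g : G, g * g = 1 → g = 1 := by
    intro g hgg
    by_contra hg
    have hne : v₀ ≠ g • v₀ := by
      intro h
      exact hg (hfree g v₀ h.symm)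
    obtain ⟨w0⟩ := hconn v₀ (g • v₀)
    set p := w0.bypass with hpdef
    have hp : p.IsPath := w0.bypass_isPath
    have hgg2 : g • g • v₀ = v₀ := by rw [← mul_smul, hgg, one_smul]
    let f : T →g T := ⟨fun v => g • v, fun h => hadj g _ _ h⟩
    have hfinj : Function.Injective (f : V → V) := MulAction.injective g
    let q' : T.Walk (g • v₀) v₀ := (p.map f).copy rfl hgg2
    have hq' : q'.IsPath := by
      rw [Walk.isPath_copy]
      exact Walk.map_isPath_of_injective hfinj hp
    have hpr : p.reverse.IsPath := hp.reverse
    have hPeq : q' = p.reverse := by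
      have := hacy.path_unique (⟨q', hq'⟩ : T.Path (g • v₀) v₀) ⟨p.reverse, hpr⟩
      exact congrArg Subtype.val this
    -- turn into a statement about support lists
    set l := p.support with hldef
    have hmapeq : l.map (f : V → V) = l.reverse := by
      have h1 : q'.support = (p.map f).support := Walk.support_copy _ _ _
      have h2 : (p.map f).support = l.map (f : V → V) := by
        rw [hldef]; exact Walk.support_map f p
      have h3 : p.reverse.support = l.reverse := by
        rw [hldef]; exact Walk.support_reverse p
      rw [← h2, ← h1, hPeq, h3]
    have hlen : l.length = p.length + 1 := by rw [hldef]; exact Walk.length_support p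
    have hn2 : 2 ≤ l.length := by
      have : p.length ≠ 0 := fun h0 => hne (Walk.eq_of_length_eq_zero h0)
      omega
    have key : ∀ i j : ℕ, ∀ (hi : i < l.length) (hj : j < l.length), i + j + 1 = l.length →
        g • (l.get ⟨i, hi⟩) = l.get ⟨j, hj⟩ := by
      intro i j hi hj hij
      obtain rfl : j = l.length - 1 - i := by omega
      have h1 := List.get_of_eq hmapeq ⟨i, by rw [List.length_map]; exact hi⟩
      simp only [List.get_eq_getElem, List.getElem_map, List.getElem_reverse] at h1
      exact h1
    have adjkey : ∀ i j : ℕ, ∀ (hi : i < l.length) (hj : j < l.length), i + 1 = j →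
        T.Adj (l.get ⟨i, hi⟩) (l.get ⟨j, hj⟩) := by
      intro i j hi hj hij
      obtain rfl : j = i + 1 := hij.symm
      have hchain : List.Chain' T.Adj l := by rw [hldef]; exact Walk.isChain_adj_support p
      exact List.isChain_iff_getElem.mp hchain i (by omega)
    rcases Nat.even_or_odd l.length with ⟨k, hk⟩ | ⟨k, hk⟩
    · -- even length: middle edge inverted
      have hk1 : 1 ≤ k := by omega
      have e1 := key (k - 1) k (by omega) (by omega) (by omega)
      have e2 := key k (k - 1) (by omega) (by omega) (by omega)
      have ha := adjkey (k - 1) k (by omega) (by omega) (by omega)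
      exact hninv g _ _ ha e1 e2
    · -- odd length: middle vertex fixed
      have e1 := key k k (by omega) (by omega) (by omega)
      exact hg (hfree g _ e1)
  -- Zorn: a "tree of representatives" M
  set P : Set (Set V) := {s | (∀ x ∈ s, ∀ y ∈ s, ∃ w : T.Walk x y, ∀ z ∈ w.support, z ∈ s) ∧
      (∀ x ∈ s, ∀ y ∈ s, ∀ g : G, g • x = y → x = y)} with hPdef
  obtain ⟨M, hMP, hMmax⟩ : ∃ M, M ∈ P ∧ ∀ s ∈ P, M ⊆ s → s ⊆ M := by
    obtain ⟨M, hM⟩ := zorn_subset P (by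
      intro c hc hchain
      refine ⟨⋃₀ c, ⟨?_, ?_⟩, fun s hs => Set.subset_sUnion_of_mem hs⟩
      · intro x hx y hy
        obtain ⟨s, hs, hxs⟩ := hx
        obtain ⟨t, ht, hyt⟩ := hy
        have hst : s ⊆ t ∨ t ⊆ s := by
          rcases eq_or_ne s t with rfl | hne
          · exact Or.inl subset_rfl
          · exact (hchain hs ht hne).imp id id
        rcases hst with hst | hts
        · obtain ⟨w, hw⟩ := (hc ht).1 x (hst hxs) y hyt
          exact ⟨w, fun z hz => Set.subset_sUnion_of_mem ht (hw z hz)⟩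
        · obtain ⟨w, hw⟩ := (hc hs).1 x hxs y (hts hyt)
          exact ⟨w, fun z hz => Set.subset_sUnion_of_mem hs (hw z hz)⟩
      · intro x hx y hy g hg
        obtain ⟨s, hs, hxs⟩ := hx
        obtain ⟨t, ht, hyt⟩ := hy
        have hst : s ⊆ t ∨ t ⊆ s := by
          rcases eq_or_ne s t with rfl | hne
          · exact Or.inl subset_rfl
          · exact (hchain hs ht hne).imp id id
        rcases hst with hst | hts
        · exact (hc ht).2 x (hst hxs) y hyt g hg
        · exact (hc hs).2 x hxs y (hts hyt) g hg)
    exact ⟨M, hM.1, fun s hs hMs => hM.2 hs hMs⟩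
  have hMconn := hMP.1
  have hMinj := hMP.2
  -- M is nonempty
  have hMne : M.Nonempty := by
    by_contra hne
    rw [Set.not_nonempty_iff_eq_empty] at hne
    have h0 : ({v₀} : Set V) ∈ P := by
      constructor
      · intro x hx y hy
        rw [Set.mem_singleton_iff] at hx hy
        subst hx; subst hy
        exact ⟨Walk.nil, by simp⟩
      · intro x hx y hy g hg
        rw [Set.mem_singleton_iff] at hx hy
        rw [hx, hy]
    have := hMmax _ h0 (by rw [hne]; exact Set.empty_subset _)
    have : v₀ ∈ M := this rfl
    rw [hne] at this
    exact this
  -- every vertex is in the orbit of a point of M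
  have hcov : ∀ v : V, ∃ g : G, g⁻¹ • v ∈ M := by
    by_contra hU
    push_neg at hU
    obtain ⟨y, hy⟩ := hU
    obtain ⟨m₀, hm₀⟩ := hMne
    have hyU : ¬ ∃ g : G, g⁻¹ • y ∈ M := fun ⟨g, hgm⟩ => hy g hgm
    have hm₀U : ∃ g : G, g⁻¹ • m₀ ∈ M := ⟨1, by simpa using hm₀⟩
    have cross : ∀ (u z : V) (w : T.Walk u z), (∃ g : G, g⁻¹ • u ∈ M) →
        ¬ (∃ g : G, g⁻¹ • z ∈ M) →
        ∃ a b : V, T.Adj a b ∧ (∃ g : G, g⁻¹ • a ∈ M) ∧ ¬ (∃ g : G, g⁻¹ • b ∈ M) := by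
      intro u z w
      induction w with
      | nil => exact fun h1 h2 => absurd h1 h2
      | @cons u b z ha p ih =>
        intro h1 h2
        by_cases hb : ∃ g : G, g⁻¹ • b ∈ M
        · exact ih hb h2
        · exact ⟨u, b, ha, h1, hb⟩
    obtain ⟨w0⟩ := hconn m₀ y
    obtain ⟨a, b, hab, haU, hbU⟩ := cross m₀ y w0 hm₀U hyU
    obtain ⟨ga, hga⟩ := haU
    have hadj' : T.Adj (ga⁻¹ • a) (ga⁻¹ • b) := hadj ga⁻¹ _ _ hab
    have hbU' : ∀ g : G, g⁻¹ • (ga⁻¹ • b) ∉ M := by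
      intro g hgm
      exact hbU ⟨ga * g, by rwa [mul_inv_rev, mul_smul]⟩
    set w' := ga⁻¹ • b with hw'def
    set m := ga⁻¹ • a with hmdef
    have hM' : insert w' M ∈ P := by
      constructor
      · intro x hx y' hy'
        rcases Set.mem_insert_iff.mp hx with rfl | hxM
        · rcases Set.mem_insert_iff.mp hy' with rfl | hyM
          · exact ⟨Walk.nil, by simp⟩
          · obtain ⟨w1, hw1⟩ := hMconn m hga y' hyM
            refine ⟨Walk.cons hadj'.symm w1, ?_⟩
            intro z hz
            rw [Walk.support_cons, List.mem_cons] at hz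
            rcases hz with rfl | hz
            · exact Set.mem_insert _ _
            · exact Set.mem_insert_of_mem _ (hw1 z hz)
        · rcases Set.mem_insert_iff.mp hy' with rfl | hyM
          · obtain ⟨w1, hw1⟩ := hMconn m hga x hxM
            refine ⟨(Walk.cons hadj'.symm w1).reverse, ?_⟩
            intro z hz
            rw [Walk.support_reverse, List.mem_reverse] at hz
            rw [Walk.support_cons, List.mem_cons] at hz
            rcases hz with rfl | hz
            · exact Set.mem_insert _ _
            · exact Set.mem_insert_of_mem _ (hw1 z hz)
          · obtain ⟨w1, hw1⟩ := hMconn x hxM y' hyM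
            exact ⟨w1, fun z hz => Set.mem_insert_of_mem _ (hw1 z hz)⟩
      · intro x hx y' hy' g hg
        rcases Set.mem_insert_iff.mp hx with rfl | hxM
        · rcases Set.mem_insert_iff.mp hy' with rfl | hyM
          · rfl
          · exfalso
            exact hbU' g⁻¹ (by rwa [inv_inv, hg])
        · rcases Set.mem_insert_iff.mp hy' with rfl | hyM
          · exfalso
            refine hbU' g ?_
            rw [← hg, inv_smul_smul]
            exact hxM
          · exact hMinj x hxM y' hyM g hg
    have hsub := hMmax _ hM' (Set.subset_insert _ _)
    have : w' ∈ M := hsub (Set.mem_insert _ _)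
    exact hbU' 1 (by simpa using this)
  choose gam hgam using hcov
  have hgamuniq : ∀ (v : V) (g : G), g⁻¹ • v ∈ M → g = gam v := by
    intro v g hg
    have h1 : ((gam v)⁻¹ * g) • (g⁻¹ • v) = (gam v)⁻¹ • v := by
      rw [mul_smul, smul_inv_smul]
    have h2 := hMinj _ hg _ (hgam v) _ h1
    have h3 : g⁻¹ • v = (gam v)⁻¹ • v := h2
    have := hcancel g⁻¹ (gam v)⁻¹ v h3
    exact inv_injective this
  have DisjM : ∀ (g : G) (x : V), x ∈ M → g • x ∈ M → g = 1 := by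
    intro g x hx hgx
    have := hMinj x hx _ hgx g rfl
    exact hfree g x this.symm
  -- the generating set with its inverses
  set S₀ : Set G := {g | g ≠ 1 ∧ ∃ a ∈ M, ∃ b ∈ M, T.Adj a (g • b)} with hS₀def
  have hS₀inv : ∀ g ∈ S₀, g⁻¹ ∈ S₀ := by
    rintro g ⟨hg1, a, ha, b, hb, hab⟩
    refine ⟨inv_ne_one.mpr hg1, b, hb, a, ha, ?_⟩
    have := hadj g⁻¹ _ _ hab
    rw [inv_smul_smul] at this
    exact this.symm
  have hS₀ne : ∀ g ∈ S₀, g ≠ 1 := fun g hg => hg.1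
  have hABex : ∀ g ∈ S₀, ∃ a ∈ M, ∃ b ∈ M, T.Adj a (g • b) := fun g hg => hg.2
  choose A hA B hB hAB using hABex
  -- the key geometric lemma: the walk associated to a reduced word
  have KeyW : ∀ (l : List G) (g : G) (hg : g ∈ S₀), (∀ x ∈ l, x ∈ S₀) →
      List.Chain' (fun a b => b ≠ a⁻¹) (g :: l) →
      ∃ (t : G) (ht : t ∈ S₀) (W : T.Walk (A g hg) (((g :: l).prod) • (B t ht))),
        Good W ∧ W.darts.head? = some ⟨(A g hg, g • B g hg), hAB g hg⟩ := by
    intro l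
    induction l with
    | nil =>
      intro g hg _ _
      refine ⟨g, hg, (Walk.cons (hAB g hg) Walk.nil).copy rfl (by simp), ?_, ?_⟩
      · rw [Good, Walk.darts_copy, Walk.darts_cons, Walk.darts_nil]
        exact List.isChain_singleton _
      · rw [Walk.darts_copy, Walk.darts_cons, Walk.darts_nil]
        rfl
    | cons g₂ l' ih =>
      intro g hg hmem hch
      have hg₂S : g₂ ∈ S₀ := hmem g₂ (List.mem_cons_self)
      have hch₂ : List.Chain' (fun a b => b ≠ a⁻¹) (g₂ :: l') := (List.isChain_cons.mp hch).2
      have hne2 : g₂ ≠ g⁻¹ := (List.isChain_cons_cons.mp hch).1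
      obtain ⟨t, ht, W', hGood', hhead'⟩ :=
        ih g₂ hg₂S (fun x hx => hmem x (List.mem_cons_of_mem _ hx)) hch₂
      -- path inside M from B g to A g₂
      obtain ⟨w1, hw1⟩ := hMconn (B g hg) (hB g hg) (A g₂ hg₂S) (hA g₂ hg₂S)
      set Pm := w1.bypass with hPmdef
      have hPmpath : Pm.IsPath := w1.bypass_isPath
      have hPmM : ∀ z ∈ Pm.support, z ∈ M := fun z hz =>
        hw1 z (Walk.support_bypass_subset _ hz)
      let f : T →g T := ⟨fun v => g • v, fun h => hadj g _ _ h⟩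
      have hfinj : Function.Injective (f : V → V) := MulAction.injective g
      set J := Pm.append W' with hJdef
      have hGoodJ : Good J := by
        rw [Good, hJdef, Walk.darts_append]
        refine List.isChain_append.2 ⟨Good.of_isPath hPmpath, hGood', ?_⟩
        intro x hx y hy
        rw [hhead', Option.mem_some_iff] at hy
        subst hy
        have hxfst : x.toProd.1 ∈ M := by
          apply hPmM
          exact Walk.dart_fst_mem_support_of_mem_darts _ (mem_of_getLast? hx)
        intro hcon
        have hcon' : g₂ • B g₂ hg₂S = x.toProd.1 := hcon
        exact hS₀ne g₂ hg₂S (DisjM g₂ _ (hB g₂ hg₂S) (hcon' ▸ hxfst))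
      have hGoodJf : Good (J.map f) := Good.map hfinj hGoodJ
      refine ⟨t, ht, (Walk.cons (hAB g hg) (J.map f)).copy rfl ?_, ?_, ?_⟩
      · show g • ((g₂ :: l').prod • B t ht) = ((g :: g₂ :: l').prod) • B t ht
        rw [List.prod_cons (a := g), mul_smul]
      · rw [Good, Walk.darts_copy, Walk.darts_cons]
        refine List.isChain_cons.2 ⟨?_, hGoodJf⟩
        intro y hy
        rw [darts_map_head?] at hy
        rw [hJdef, Walk.darts_append] at hy
        cases hc : Pm.darts with
        | nil =>
          rw [hc, List.nil_append, hhead'] at hy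
          simp only [Option.map_some, Option.mem_some_iff] at hy
          subst hy
          intro hcon
          have hcon' : (g * g₂) • B g₂ hg₂S = A g hg := by
            rw [mul_smul]; exact hcon
          have : g * g₂ = 1 := DisjM _ _ (hB g₂ hg₂S) (by rw [hcon']; exact hA g hg)
          exact hne2 (eq_inv_of_mul_eq_one_right this)
        | cons d0 rest =>
          rw [hc, List.cons_append, List.head?_cons] at hy
          simp only [Option.map_some, Option.mem_some_iff] at hy
          subst hy
          intro hcon
          have hd0 : d0.toProd.2 ∈ M := by
            apply hPmM
            apply Walk.dart_snd_mem_support_of_mem_darts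
            rw [hc]; exact List.mem_cons_self
          have hcon' : g • d0.toProd.2 = A g hg := hcon
          exact hS₀ne g hg (DisjM g _ hd0 (hcon' ▸ hA g hg))
      · rw [Walk.darts_copy, Walk.darts_cons]
        rfl
  -- generation: every element lies in the closure of S₀
  have hcl : ∀ (u z : V) (w : T.Walk u z), gam u ∈ Subgroup.closure S₀ →
      gam z ∈ Subgroup.closure S₀ := by
    intro u z w
    induction w with
    | nil => exact id
    | @cons u b z ha p ih =>
      intro hu
      apply ih
      by_cases hone : (gam b)⁻¹ * gam u = 1
      · have : gam b = gam u := inv_mul_eq_one.mp hone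
        rw [this]; exact hu
      · have hadj1 : T.Adj ((gam b)⁻¹ • u) ((gam b)⁻¹ • b) := hadj (gam b)⁻¹ _ _ ha
        have hrw : (gam b)⁻¹ • u = ((gam b)⁻¹ * gam u) • ((gam u)⁻¹ • u) := by
          rw [mul_smul, smul_inv_smul]
        have hS : ((gam b)⁻¹ * gam u) ∈ S₀ := by
          refine ⟨hone, (gam b)⁻¹ • b, hgam b, (gam u)⁻¹ • u, hgam u, ?_⟩
          rw [← hrw]
          exact hadj1.symm
        have hgoal : gam b = gam u * ((gam b)⁻¹ * gam u)⁻¹ := by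
          rw [mul_inv_rev, inv_inv, ← mul_assoc, mul_inv_cancel, one_mul]
        rw [hgoal]
        exact mul_mem hu (inv_mem (Subgroup.subset_closure hS))
  obtain ⟨m₀, hm₀⟩ := hMne
  have hgam_m₀ : gam m₀ ∈ Subgroup.closure S₀ := by
    have h1 : (1 : G) = gam m₀ := hgamuniq m₀ 1 (by simpa using hm₀)
    rw [← h1]; exact one_mem _
  have hgen : ∀ g : G, g ∈ Subgroup.closure S₀ := by
    intro g
    have hgv : g⁻¹ • (g • m₀) ∈ M := by rw [inv_smul_smul]; exact hm₀
    have hgg : g = gam (g • m₀) := hgamuniq _ g hgv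
    obtain ⟨w⟩ := hconn m₀ (g • m₀)
    have := hcl m₀ _ w hgam_m₀
    rwa [← hgg] at this
  -- choose one element of each pair {g, g⁻¹}
  have requiv : Equivalence (fun a b : G => b = a ∨ b = a⁻¹) := by
    refine ⟨fun a => Or.inl rfl, ?_, ?_⟩
    · rintro a b (rfl | rfl)
      · exact Or.inl rfl
      · exact Or.inr (inv_inv a).symm
    · rintro a b c (rfl | rfl) h2
      · exact h2
      · rcases h2 with rfl | rfl
        · exact Or.inr rfl
        · exact Or.inl (inv_inv a)
  let sd : Setoid G := ⟨fun a b => b = a ∨ b = a⁻¹, requiv⟩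
  let pick : G → G := fun g => (@Quotient.mk G sd g).out
  have hpick_mem : ∀ g : G, pick g = g ∨ pick g = g⁻¹ := by
    intro g
    have h := @Quotient.mk_out G sd g
    rcases h with h | h
    · exact Or.inl h.symm
    · right
      show (@Quotient.mk G sd g).out = g⁻¹
      conv_rhs => rw [h]
      rw [inv_inv]
  have hpick_inv : ∀ g : G, pick g⁻¹ = pick g := by
    intro g
    show (@Quotient.mk G sd g⁻¹).out = (@Quotient.mk G sd g).out
    congr 1
    exact Quotient.sound (Or.inr (inv_inv g).symm)
  -- the basis
  let S : Type u := {g : G // g ∈ S₀ ∧ pick g = g}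
  let ψ : FreeGroup S →* G := FreeGroup.lift (fun s => (s : G))
  have hsurjψ : Function.Surjective ψ := by
    rw [← MonoidHom.range_eq_top, FreeGroup.range_lift_eq_closure, eq_top_iff]
    have hsub : S₀ ⊆ ↑(Subgroup.closure (Set.range (fun s : S => (s : G)))) := by
      intro g hgS
      rcases hpick_mem g with hp | hp
      · exact Subgroup.subset_closure ⟨⟨g, hgS, hp⟩, rfl⟩
      · have hginv : g⁻¹ ∈ S₀ := hS₀inv g hgS
        have hp' : pick g⁻¹ = g⁻¹ := by rw [hpick_inv, hp]
        have hmem2 : g⁻¹ ∈ Subgroup.closure (Set.range (fun s : S => (s : G))) :=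
          Subgroup.subset_closure ⟨⟨g⁻¹, hginv, hp'⟩, rfl⟩
        simpa using inv_mem hmem2
    intro g _
    exact (Subgroup.closure_le _).mpr hsub (hgen g)
  have hinjψ : Function.Injective ψ := by
    refine (injective_iff_map_eq_one ψ).mpr ?_
    intro x hx1
    by_contra hxne
    set L := x.toWord with hLdef
    have hLne : L ≠ [] := fun h => hxne (FreeGroup.toWord_eq_nil_iff.mp h)
    set Fm : S × Bool → G := fun p => cond p.2 (p.1 : G) (p.1 : G)⁻¹ with hFmdef
    have hprod : (L.map Fm).prod = 1 := by
      have h1 : ψ (FreeGroup.mk L) = (L.map Fm).prod := FreeGroup.lift_mk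
      rw [hLdef, FreeGroup.mk_toWord] at h1
      rw [← h1]
      exact hx1
    have hsplit : ∀ (L₂ : List (S × Bool)) (s : S) (b : Bool) (L₃ : List (S × Bool)),
        L ≠ L₂ ++ (s, b) :: (s, !b) :: L₃ := by
      intro L₂ s b L₃ hEq
      have hred : FreeGroup.reduce L = L := by rw [hLdef]; exact FreeGroup.reduce_toWord x
      exact FreeGroup.reduce.not (hred.trans hEq)
    have hchainGen : ∀ (Wd : List (S × Bool)),
        (∀ (L₂ : List (S × Bool)) (s : S) (b : Bool) (L₃ : List (S × Bool)),
          Wd ≠ L₂ ++ (s, b) :: (s, !b) :: L₃) →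
        List.Chain' (fun a b => b ≠ a⁻¹) (Wd.map Fm) := by
      intro Wd
      induction Wd with
      | nil => intro _; exact List.isChain_nil
      | cons p rest ih =>
        intro hW
        cases rest with
        | nil => exact List.isChain_singleton _
        | cons q rest' =>
          rw [List.map_cons, List.map_cons]
          refine List.isChain_cons_cons.2 ⟨?_, ?_⟩
          · obtain ⟨s₁, b₁⟩ := p
            obtain ⟨s₂, b₂⟩ := q
            intro heq
            have hs₁ne : (s₁ : G) ≠ 1 := hS₀ne _ s₁.2.1
            have hs₁pick : pick (s₁ : G) = (s₁ : G) := s₁.2.2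
            have hs₂pick : pick (s₂ : G) = (s₂ : G) := s₂.2.2
            have tors : (s₂ : G) = (s₁ : G)⁻¹ → False := by
              intro h2
              have h3 : (s₂ : G) = (s₁ : G) := by
                rw [← hs₂pick, h2, hpick_inv, hs₁pick]
              have h4 : (s₁ : G) = (s₁ : G)⁻¹ := h3.symm.trans h2
              have h5 : (s₁ : G) * (s₁ : G) = 1 := by
                nth_rewrite 2 [h4]
                exact mul_inv_cancel _
              exact hs₁ne (htor _ h5)
            have same : (s₂ : G) = (s₁ : G) → s₂ = s₁ := fun h => Subtype.ext h
            cases b₁ <;> cases b₂ <;>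
              simp only [hFmdef, cond_true, cond_false] at heq
            · -- b₁ = false, b₂ = false : s₂⁻¹ = (s₁⁻¹)⁻¹
              rw [inv_inv] at heq
              exact tors (inv_eq_iff_eq_inv.mp heq)
            · -- b₁ = false, b₂ = true : s₂ = (s₁⁻¹)⁻¹ = s₁
              rw [inv_inv] at heq
              obtain rfl := same heq
              exact hW [] s₂ false rest' rfl
            · -- b₁ = true, b₂ = false : s₂⁻¹ = s₁⁻¹
              obtain rfl := same (inv_injective heq)
              exact hW [] s₂ true rest' rfl
            · -- b₁ = true, b₂ = true : s₂ = s₁⁻¹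
              exact tors heq
          · have hW' : ∀ (L₂ : List (S × Bool)) (s : S) (b : Bool) (L₃ : List (S × Bool)),
                (q :: rest') ≠ L₂ ++ (s, b) :: (s, !b) :: L₃ :=
              fun L₂ s b L₃ h => hW (p :: L₂) s b L₃ (by rw [List.cons_append, h])
            exact ih hW'
    have hchL : List.Chain' (fun a b => b ≠ a⁻¹) (L.map Fm) := hchainGen L hsplit
    have hmemL : ∀ a ∈ L.map Fm, a ∈ S₀ := by
      intro a ha
      rw [List.mem_map] at ha
      obtain ⟨⟨s, b⟩, _, rfl⟩ := ha
      cases b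
      · exact hS₀inv _ s.2.1
      · exact s.2.1
    cases hLm : L.map Fm with
    | nil => exact hLne (by simpa using hLm)
    | cons gh ltail =>
      rw [hLm] at hchL hprod
      have hghS : gh ∈ S₀ := by
        have := hmemL gh
        rw [hLm] at this
        exact this (List.mem_cons_self)
      have hmem' : ∀ x ∈ ltail, x ∈ S₀ := by
        intro x hx
        have := hmemL x
        rw [hLm] at this
        exact this (List.mem_cons_of_mem _ hx)
      obtain ⟨t, ht, W, hGoodW, hheadW⟩ := KeyW ltail gh hghS hmem' hchL
      set W2 := W.copy rfl (by rw [hprod, one_smul]) with hW2def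
      have hGoodW2 : Good W2 := by
        rw [Good, hW2def, Walk.darts_copy]
        exact hGoodW
      have hW2path : W2.IsPath := hGoodW2.isPath hacy
      obtain ⟨w3, hw3⟩ := hMconn _ (hA gh hghS) _ (hB t ht)
      have hP3 : w3.bypass.IsPath := w3.bypass_isPath
      have hEqP : W2 = w3.bypass :=
        congrArg Subtype.val (hacy.path_unique ⟨W2, hW2path⟩ ⟨w3.bypass, hP3⟩)
      have hd : (⟨(A gh hghS, gh • B gh hghS), hAB gh hghS⟩ : T.Dart) ∈ W2.darts := by
        rw [hW2def, Walk.darts_copy]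
        exact List.mem_of_mem_head? (by rw [hheadW]; rfl)
      have hsnd : gh • B gh hghS ∈ W2.support :=
        Walk.dart_snd_mem_support_of_mem_darts _ hd
      rw [hEqP] at hsnd
      have hsndM : gh • B gh hghS ∈ M := hw3 _ (Walk.support_bypass_subset _ hsnd)
      exact hS₀ne gh hghS (DisjM gh _ (hB gh hghS) hsndM)
  exact ⟨S, ⟨(MulEquiv.ofBijective ψ ⟨hinjψ, hsurjψ⟩).symm⟩⟩
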